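/- Let μ be a nonzero finite positive measure on Ω, let K ⊆ ℂ be compact, and let (f_n) be measurable functions with values in K. Then for every δ > 0 there exist a closed set J ⊆ K with diameter at most δ and a subsequence (f_{n_k}) such that lim_{k→∞} μ(f_{n_k}^{-1}(J)) = μ(Ω), provided that for all disjoint compact sets A, B ⊆ ℂ one has lim_{n→∞} μ(f_n^{-1}(A)) · μ(f_n^{-1}(B)) = 0. -/

import Mathlib

open MeasureTheory Filter Set

/-- For a sequence of measurable functions with values in a compact set `K ⊆ ℂ` satisfying the
product condition, for every `δ > 0` there is a closed set `J ⊆ K` of diameter at most `δ` and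
a subsequence along which `μ(f n ⁻¹ J)` tends to `μ(Ω)`. -/
theorem stmt2 {Ω : Type*} [MeasurableSpace Ω] (μ : Measure Ω) [IsFiniteMeasure μ]
    (hμ : μ ≠ 0) (K : Set ℂ) (hK : IsCompact K)
    (f : ℕ → Ω → ℂ) (hmeas : ∀ n, Measurable (f n))
    (hrange : ∀ n x, f n x ∈ K)
    (hprod : ∀ A B : Set ℂ, IsCompact A → IsCompact B → Disjoint A B →
      Tendsto (fun n => (μ (f n ⁻¹' A)).toReal * (μ (f n ⁻¹' B)).toReal)
        atTop (nhds 0)) :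
    ∀ δ > (0:ℝ), ∃ J ⊆ K, IsClosed J ∧ Metric.diam J ≤ δ ∧
      ∃ φ : ℕ → ℕ, StrictMono φ ∧
        Tendsto (fun k => μ (f (φ k) ⁻¹' J)) atTop (nhds (μ univ)) := by
  intro δ hδ
  have hμu : μ univ ≠ 0 := by
    simpa [Measure.measure_univ_ne_zero] using hμ
  have hμfin : μ univ ≠ ⊤ := measure_ne_top μ univ
  -- cover K by finitely many balls of radius δ/4
  obtain ⟨t, ht⟩ := hK.elim_finite_subcover (fun c : ℂ => Metric.ball c (δ/4))
    (fun _ => Metric.isOpen_ball)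
    (fun x hx => mem_iUnion.2 ⟨x, Metric.mem_ball_self (by linarith)⟩)
  set A : ℂ → Set ℂ := fun c => K ∩ Metric.closedBall c (δ/4) with hA
  have hcover : ∀ n, (univ : Set Ω) ⊆ ⋃ c ∈ t, f n ⁻¹' A c := by
    intro n x _
    have hx := hrange n x
    have := ht hx
    simp only [mem_iUnion, exists_prop] at this
    obtain ⟨c, hc, hxc⟩ := this
    exact mem_biUnion hc ⟨hx, Metric.ball_subset_closedBall hxc⟩
  have hsum : ∀ n, μ univ ≤ ∑ c ∈ t, μ (f n ⁻¹' A c) := fun n =>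
    (measure_mono (hcover n)).trans (measure_biUnion_finset_le t _)
  set ε : ENNReal := (μ univ / 2) / t.card with hε
  have hε0 : ε ≠ 0 := by
    apply ENNReal.div_ne_zero.2
    constructor
    · exact ENNReal.div_ne_zero.2 ⟨hμu, by norm_num⟩
    · exact ENNReal.natCast_ne_top t.card
  have htne : t.Nonempty := by
    rcases t.eq_empty_or_nonempty with h | h
    · exfalso
      have h0 := hsum 0
      rw [h] at h0
      simp at h0
      exact hμ h0
    · exact h
  have hεtop : ε ≠ ⊤ := by
    refine (ENNReal.div_lt_top ((ENNReal.div_lt_top hμfin (by norm_num)).ne) ?_).ne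
    exact_mod_cast Finset.card_ne_zero_of_mem htne.choose_spec
  -- pigeonhole: some c ∈ t has ε ≤ μ (f n ⁻¹' A c) infinitely often
  have hpig : ∃ c ∈ t, {n : ℕ | ε ≤ μ (f n ⁻¹' A c)}.Infinite := by
    by_contra h
    push_neg at h
    have hfin : (⋃ c ∈ t, {n : ℕ | ε ≤ μ (f n ⁻¹' A c)}).Finite :=
      Set.Finite.biUnion t.finite_toSet (fun c hc => h c hc)
    obtain ⟨n, hn⟩ := (hfin.infinite_compl).nonempty
    have hlt : ∀ c ∈ t, μ (f n ⁻¹' A c) ≤ ε := by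
      intro c hc
      by_contra hcon
      exact hn (mem_biUnion hc (le_of_not_ge hcon))
    have h1 : μ univ ≤ ∑ c ∈ t, μ (f n ⁻¹' A c) := hsum n
    have h2 : ∑ c ∈ t, μ (f n ⁻¹' A c) ≤ t.card * ε := by
      calc ∑ c ∈ t, μ (f n ⁻¹' A c) ≤ ∑ _c ∈ t, ε := Finset.sum_le_sum hlt
        _ = t.card * ε := by rw [Finset.sum_const, nsmul_eq_mul]
    have h3 : (t.card : ENNReal) * ε ≤ μ univ / 2 := by
      rw [hε]
      exact ENNReal.mul_div_le
    have h4 : μ univ / 2 < μ univ := ENNReal.half_lt_self hμu hμfin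
    exact absurd ((h1.trans h2).trans h3) (not_le.2 h4)
  obtain ⟨c, hct, hSinf⟩ := hpig
  set S : Set ℕ := {n : ℕ | ε ≤ μ (f n ⁻¹' A c)} with hS
  set φ : ℕ → ℕ := Nat.nth (· ∈ S) with hφ
  have hφmono : StrictMono φ := Nat.nth_strictMono hSinf
  have hφmem : ∀ k, φ k ∈ S := fun k => Nat.nth_mem_of_infinite hSinf k
  -- the target set J and the "far" set B
  set J : Set ℂ := K ∩ Metric.closedBall c (δ/2) with hJ
  set B : Set ℂ := K ∩ (Metric.ball c (δ/2))ᶜ with hB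
  refine ⟨J, inter_subset_left, hK.isClosed.inter Metric.isClosed_closedBall, ?_, φ, hφmono, ?_⟩
  · calc Metric.diam J ≤ Metric.diam (Metric.closedBall c (δ/2)) :=
        Metric.diam_mono inter_subset_right Metric.isBounded_closedBall
      _ ≤ 2 * (δ/2) := Metric.diam_closedBall (by linarith)
      _ = δ := by ring
  -- compactness and disjointness for hprod
  have hAcomp : IsCompact (A c) := hK.inter_right Metric.isClosed_closedBall
  have hBcomp : IsCompact B := hK.inter_right Metric.isOpen_ball.isClosed_compl
  have hdisj : Disjoint (A c) B := by
    rw [Set.disjoint_left]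
    rintro x ⟨-, hx1⟩ ⟨-, hx2⟩
    exact hx2 (Metric.ball_subset_ball (by linarith) (Metric.closedBall_subset_ball
      (by linarith) hx1))
  have hprodAB := hprod (A c) B hAcomp hBcomp hdisj
  -- along the subsequence, μ (f (φ k) ⁻¹' B) → 0
  set c0 : ℝ := ε.toReal with hc0
  have hc0pos : 0 < c0 := ENNReal.toReal_pos hε0 hεtop
  have hlow : ∀ k, c0 ≤ (μ (f (φ k) ⁻¹' A c)).toReal := by
    intro k
    exact ENNReal.toReal_le_toReal hεtop (measure_ne_top _ _) |>.2 (hφmem k)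
  have hprodφ : Tendsto (fun k => (μ (f (φ k) ⁻¹' A c)).toReal * (μ (f (φ k) ⁻¹' B)).toReal)
      atTop (nhds 0) := hprodAB.comp hφmono.tendsto_atTop
  have hBto0real : Tendsto (fun k => (μ (f (φ k) ⁻¹' B)).toReal) atTop (nhds 0) := by
    have hub : ∀ k, (μ (f (φ k) ⁻¹' B)).toReal ≤
        (1/c0) * ((μ (f (φ k) ⁻¹' A c)).toReal * (μ (f (φ k) ⁻¹' B)).toReal) := by
      intro k
      have hBnn : (0:ℝ) ≤ (μ (f (φ k) ⁻¹' B)).toReal := ENNReal.toReal_nonneg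
      have hm := mul_le_mul_of_nonneg_right (hlow k) hBnn
      calc (μ (f (φ k) ⁻¹' B)).toReal
          = (1/c0) * (c0 * (μ (f (φ k) ⁻¹' B)).toReal) := by
            rw [← mul_assoc, one_div, inv_mul_cancel₀ (ne_of_gt hc0pos), one_mul]
        _ ≤ (1/c0) * ((μ (f (φ k) ⁻¹' A c)).toReal * (μ (f (φ k) ⁻¹' B)).toReal) :=
            mul_le_mul_of_nonneg_left hm (by positivity)
    have htend : Tendsto (fun k => (1/c0) *
        ((μ (f (φ k) ⁻¹' A c)).toReal * (μ (f (φ k) ⁻¹' B)).toReal)) atTop (nhds 0) := by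
      have := hprodφ.const_mul (1/c0)
      simpa using this
    exact squeeze_zero (fun k => ENNReal.toReal_nonneg) hub htend
  have hBto0 : Tendsto (fun k => μ (f (φ k) ⁻¹' B)) atTop (nhds 0) :=
    (ENNReal.tendsto_toReal_iff (fi := atTop) (f := fun k => μ (f (φ k) ⁻¹' B))
      (fun k => measure_ne_top μ _) (x := 0) (by norm_num)).1 (by simpa using hBto0real)
  -- squeeze: μ univ - μ(f⁻¹ B) ≤ μ(f⁻¹ J) ≤ μ univ
  have hsplit : ∀ k, μ univ ≤ μ (f (φ k) ⁻¹' J) + μ (f (φ k) ⁻¹' B) := by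
    intro k
    have hcov : (univ : Set Ω) ⊆ f (φ k) ⁻¹' J ∪ f (φ k) ⁻¹' B := by
      intro x _
      by_cases hx : f (φ k) x ∈ Metric.closedBall c (δ/2)
      · exact Or.inl ⟨hrange _ x, hx⟩
      · exact Or.inr ⟨hrange _ x, fun hb => hx (Metric.ball_subset_closedBall hb)⟩
    exact (measure_mono hcov).trans (measure_union_le _ _)
  have hlower : ∀ k, μ univ - μ (f (φ k) ⁻¹' B) ≤ μ (f (φ k) ⁻¹' J) := fun k =>
    tsub_le_iff_right.2 (hsplit k)
  have hlowtend : Tendsto (fun k => μ univ - μ (f (φ k) ⁻¹' B)) atTop (nhds (μ univ)) := by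
    have := ENNReal.Tendsto.sub (tendsto_const_nhds (x := μ univ)) hBto0 (Or.inl hμfin)
    simpa using this
  exact tendsto_of_tendsto_of_tendsto_of_le_of_le hlowtend tendsto_const_nhds hlower
    (fun k => measure_mono (subset_univ _))
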